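/- Let L be a Lie ring acting on a Z_p-module M via ψ: L → End(M) with action length d < p. Then [M, _i exp(L)] = [M, _i L] for all i ≥ 1, where exp(L) denotes the set L with the group action g ↦ exp(ψ)(g) (truncated exponential), and the iterated commutator submodules are defined by [M, exp(L)] = Span{m - exp(ψ)(a)m} and [M, L] = Span{ψ(a)m}. -/

import Mathlib

attribute [local instance 100] LieRing.ofAssociativeRing

/-- Truncated exponential `∑_{k<p} f^k/k!` of an endomorphism of a `ℤ_[p]`-module. -/
noncomputable def texp (p : ℕ) [Fact p.Prime] {M : Type*} [AddCommGroup M] [Module ℤ_[p] M]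
    (f : Module.End ℤ_[p] M) : Module.End ℤ_[p] M :=
  ∑ k ∈ Finset.range p, Ring.inverse ((k.factorial : ℤ_[p])) • f ^ k

/-- Truncated logarithm `∑_{1≤k≤p-1} (-1)^{k+1}(g-1)^k/k`. -/
noncomputable def tlog (p : ℕ) [Fact p.Prime] {M : Type*} [AddCommGroup M] [Module ℤ_[p] M]
    (g : Module.End ℤ_[p] M) : Module.End ℤ_[p] M :=
  ∑ k ∈ Finset.Icc 1 (p - 1), ((-1 : ℤ_[p]) ^ (k + 1) * Ring.inverse ((k : ℤ_[p]))) • (g - 1) ^ k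


/-- `[U, L] = Span{a·m : m ∈ U, a ∈ L}`. -/
noncomputable def lieBr (p : ℕ) [Fact p.Prime] {M L : Type*} [AddCommGroup M] [Module ℤ_[p] M]
    [LieRing L] [LieAlgebra ℤ_[p] L]
    (ψ : L →ₗ⁅ℤ_[p]⁆ Module.End ℤ_[p] M) (U : Submodule ℤ_[p] M) : Submodule ℤ_[p] M :=
  Submodule.span ℤ_[p] {x | ∃ a : L, ∃ m ∈ U, x = ψ a m}

/-- Iterated `[M, _i L]`, with `[M, _0 L] = M`. -/
noncomputable def lieIter (p : ℕ) [Fact p.Prime] {M L : Type*} [AddCommGroup M] [Module ℤ_[p] M]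
    [LieRing L] [LieAlgebra ℤ_[p] L]
    (ψ : L →ₗ⁅ℤ_[p]⁆ Module.End ℤ_[p] M) : ℕ → Submodule ℤ_[p] M
  | 0 => ⊤
  | (i+1) => lieBr p ψ (lieIter p ψ i)


/-- `[U, exp(L)] = Span{m - exp(ψ(a))·m : m ∈ U, a ∈ L}`. -/
noncomputable def expBr (p : ℕ) [Fact p.Prime] {M L : Type*} [AddCommGroup M] [Module ℤ_[p] M]
    [LieRing L] [LieAlgebra ℤ_[p] L]
    (ψ : L →ₗ⁅ℤ_[p]⁆ Module.End ℤ_[p] M) (U : Submodule ℤ_[p] M) : Submodule ℤ_[p] M :=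
  Submodule.span ℤ_[p] {x | ∃ a : L, ∃ m ∈ U, x = m - texp p (ψ a) m}

/-- Iterated `[M, _i exp(L)]`. -/
noncomputable def expIter (p : ℕ) [Fact p.Prime] {M L : Type*} [AddCommGroup M] [Module ℤ_[p] M]
    [LieRing L] [LieAlgebra ℤ_[p] L]
    (ψ : L →ₗ⁅ℤ_[p]⁆ Module.End ℤ_[p] M) : ℕ → Submodule ℤ_[p] M
  | 0 => ⊤
  | (i+1) => expBr p ψ (expIter p ψ i)

section Aux

variable {p : ℕ} [Fact p.Prime] {M L : Type*} [AddCommGroup M] [Module ℤ_[p] M]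
    [LieRing L] [LieAlgebra ℤ_[p] L] (ψ : L →ₗ⁅ℤ_[p]⁆ Module.End ℤ_[p] M)

lemma mem_lieBr {U : Submodule ℤ_[p] M} (a : L) {m : M} (hm : m ∈ U) :
    ψ a m ∈ lieBr p ψ U :=
  Submodule.subset_span ⟨a, m, hm, rfl⟩

lemma mem_expBr {U : Submodule ℤ_[p] M} (a : L) {m : M} (hm : m ∈ U) :
    m - texp p (ψ a) m ∈ expBr p ψ U :=
  Submodule.subset_span ⟨a, m, hm, rfl⟩

lemma lieBr_mono {U V : Submodule ℤ_[p] M} (h : U ≤ V) : lieBr p ψ U ≤ lieBr p ψ V :=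
  Submodule.span_mono (fun _ ⟨a, m, hm, hx⟩ => ⟨a, m, h hm, hx⟩)

lemma expBr_mono {U V : Submodule ℤ_[p] M} (h : U ≤ V) : expBr p ψ U ≤ expBr p ψ V :=
  Submodule.span_mono (fun _ ⟨a, m, hm, hx⟩ => ⟨a, m, h hm, hx⟩)

lemma lieIter_succ_le : ∀ i, lieIter p ψ (i + 1) ≤ lieIter p ψ i
  | 0 => le_top
  | (i+1) => lieBr_mono ψ (lieIter_succ_le i)

lemma lieIter_le_of_le {i j : ℕ} (h : i ≤ j) : lieIter p ψ j ≤ lieIter p ψ i := by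
  induction h with
  | refl => exact le_rfl
  | step h ih => exact le_trans (lieIter_succ_le ψ _) ih

lemma pow_mem_lieIter (a : L) {m : M} {i : ℕ} (hm : m ∈ lieIter p ψ i) :
    ∀ k, (ψ a ^ k) m ∈ lieIter p ψ (i + k)
  | 0 => hm
  | (k+1) => by
      rw [pow_succ', Module.End.mul_apply]
      exact mem_lieBr ψ a (pow_mem_lieIter a hm k)

lemma texp_apply (f : Module.End ℤ_[p] M) (m : M) :
    texp p f m = ∑ k ∈ Finset.range p, Ring.inverse ((k.factorial : ℤ_[p])) • ((f ^ k) m) := by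
  simp [texp, LinearMap.sum_apply, LinearMap.smul_apply]

lemma sub_texp_eq (f : Module.End ℤ_[p] M) (m : M) :
    m - texp p f m
      = - ∑ k ∈ Finset.Ico 1 p, Ring.inverse ((k.factorial : ℤ_[p])) • ((f ^ k) m) := by
  have hp : 0 < p := (Fact.out : p.Prime).pos
  rw [texp_apply, Finset.range_eq_Ico, Finset.sum_eq_sum_Ico_succ_bot hp]
  simp [Nat.factorial]

lemma psi_apply_eq (a : L) (m : M) (hp2 : 2 ≤ p) :
    ψ a m = -(m - texp p (ψ a) m)
      - ∑ k ∈ Finset.Ico 2 p, Ring.inverse ((k.factorial : ℤ_[p])) • ((ψ a ^ k) m) := by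
  rw [sub_texp_eq, Finset.sum_eq_sum_Ico_succ_bot (by omega : 1 < p)]
  simp [Nat.factorial]

end Aux

section Main
variable {p : ℕ} [Fact p.Prime] {M L : Type*} [AddCommGroup M] [Module ℤ_[p] M]
    [LieRing L] [LieAlgebra ℤ_[p] L] (ψ : L →ₗ⁅ℤ_[p]⁆ Module.End ℤ_[p] M)

lemma expBr_le_lieBr (i : ℕ) :
    expBr p ψ (lieIter p ψ i) ≤ lieBr p ψ (lieIter p ψ i) := by
  rw [expBr, Submodule.span_le]
  rintro x ⟨a, m, hm, rfl⟩
  rw [SetLike.mem_coe, sub_texp_eq]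
  refine neg_mem (Submodule.sum_mem _ fun k hk => Submodule.smul_mem _ _ ?_)
  obtain ⟨j, rfl⟩ : ∃ j, k = j + 1 := ⟨k - 1, by have := (Finset.mem_Ico.mp hk).1; omega⟩
  rw [pow_succ', Module.End.mul_apply]
  exact mem_lieBr ψ a (lieIter_le_of_le ψ (Nat.le_add_right i j) (pow_mem_lieIter ψ a hm j))

lemma lie_mem_expBr_aux (d : ℕ) (h : lieIter p ψ d = ⊥) :
    ∀ t j, d ≤ j + t → ∀ (a : L) (m : M), m ∈ lieIter p ψ j →
      ψ a m ∈ expBr p ψ (lieIter p ψ j) := by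
  intro t
  induction t with
  | zero =>
    intro j hj a m hm
    have hm0 : m = 0 := by
      have := lieIter_le_of_le ψ (by omega : d ≤ j) hm
      rw [h] at this
      simpa using this
    simp [hm0]
  | succ t ih =>
    intro j hj a m hm
    have hp2 : 2 ≤ p := (Fact.out : p.Prime).two_le
    rw [psi_apply_eq ψ a m hp2]
    refine sub_mem (neg_mem (mem_expBr ψ a hm))
      (Submodule.sum_mem _ fun k hk => Submodule.smul_mem _ _ ?_)
    obtain ⟨j', rfl⟩ : ∃ j', k = j' + 1 := ⟨k - 1, by have := (Finset.mem_Ico.mp hk).1; omega⟩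
    rw [pow_succ', Module.End.mul_apply]
    have h1 : 1 ≤ j' := by have := (Finset.mem_Ico.mp hk).1; omega
    have hmem : (ψ a ^ j') m ∈ lieIter p ψ (j + 1) :=
      lieIter_le_of_le ψ (by omega) (pow_mem_lieIter ψ a hm j')
    exact expBr_mono ψ (lieIter_succ_le ψ j) (ih (j+1) (by omega) a _ hmem)

end Main

/-- For a Lie action of length `d < p`, `[M, _i exp(L)] = [M, _i L]` for all `i ≥ 1`. -/
theorem stmt8 {p : ℕ} [Fact p.Prime] {M L : Type*} [AddCommGroup M] [Module ℤ_[p] M]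
    [LieRing L] [LieAlgebra ℤ_[p] L] (ψ : L →ₗ⁅ℤ_[p]⁆ Module.End ℤ_[p] M)
    (d : ℕ) (hd : d < p) (h : lieIter p ψ d = ⊥) :
    ∀ i : ℕ, 1 ≤ i → expIter p ψ i = lieIter p ψ i := by
  have key : ∀ i : ℕ, expIter p ψ i = lieIter p ψ i := by
    intro i
    induction i with
    | zero => rfl
    | succ i ihi =>
      show expBr p ψ (expIter p ψ i) = lieBr p ψ (lieIter p ψ i)
      rw [ihi]
      refine le_antisymm (expBr_le_lieBr ψ i) ?_
      rw [lieBr, Submodule.span_le]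
      rintro x ⟨a, m, hm, rfl⟩
      exact lie_mem_expBr_aux ψ d h d i (Nat.le_add_left d i) a m hm
  exact fun i _ => key i
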